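/- arXiv:1105.6061 — 2 statements merged into one kernel-verified Lean document; each statement's English description precedes it below -/
import Mathlib

section
/- Let X₁, X₂, … be i.i.d. real random variables with ln-moment generating condition E[exp(ω Z₁)] = 1 for the log-likelihood ratio increments Z_k, where E[Z₁] < 0 and ω > 0. Then for the random walk S_n = Z₁ + ⋯ + Z_n and any threshold c > 0, P(sup_n S_n ≥ c) ≤ exp(−ω c). -/
open MeasureTheory ProbabilityTheory
open scoped ENNReal NNReal

/-- Lundberg/Wald-type inequality: if `Z₁, Z₂, …` are i.i.d. with negative mean
and `E[exp(ω Z₁)] = 1` for some `ω > 0`, then for the random walk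
`S_n = Z₁ + ⋯ + Z_n` and any `c > 0`, `P(sup_n S_n ≥ c) ≤ exp(−ω c)`. -/
theorem wald_inequality_random_walk
    {Ω : Type*} [MeasurableSpace Ω] (P : Measure Ω) [IsProbabilityMeasure P]
    (Z : ℕ → Ω → ℝ) (hmeas : ∀ n, Measurable (Z n))
    (hindep : iIndepFun Z P)
    (hident : ∀ n, P.map (Z n) = P.map (Z 0))
    (hint : Integrable (Z 0) P) (hmean : ∫ ω, Z 0 ω ∂P < 0)
    (ω₀ : ℝ) (hω₀ : 0 < ω₀)
    (hmgf : ∫ ω, Real.exp (ω₀ * Z 0 ω) ∂P = 1)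
    (c : ℝ) (hc : 0 < c) :
    P {x | ∃ n : ℕ, c ≤ ∑ k ∈ Finset.range n, Z k x}
      ≤ ENNReal.ofReal (Real.exp (-ω₀ * c)) := by
  classical
  -- Step 1: integrability and unit mean of `exp (ω₀ * Z k)` and of exponentials of sums
  have hg0_int : Integrable (fun x => Real.exp (ω₀ * Z 0 x)) P := by
    by_contra h
    rw [integral_undef h] at hmgf; norm_num at hmgf
  have hexpm : Measurable (fun y : ℝ => Real.exp (ω₀ * y)) :=
    (measurable_id.const_mul ω₀).exp
  have key : ∀ k, Integrable (fun x => Real.exp (ω₀ * Z k x)) P ∧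
      ∫ x, Real.exp (ω₀ * Z k x) ∂P = 1 := by
    intro k
    have h1 : Integrable (fun y : ℝ => Real.exp (ω₀ * y)) (P.map (Z k)) := by
      rw [hident k,
        integrable_map_measure hexpm.aestronglyMeasurable (hmeas 0).aemeasurable]
      exact hg0_int
    constructor
    · exact (integrable_map_measure hexpm.aestronglyMeasurable (hmeas k).aemeasurable).mp h1
    · calc ∫ x, Real.exp (ω₀ * Z k x) ∂P
          = ∫ y, Real.exp (ω₀ * y) ∂(P.map (Z k)) :=
            (integral_map (hmeas k).aemeasurable hexpm.aestronglyMeasurable).symm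
        _ = ∫ x, Real.exp (ω₀ * Z 0 x) ∂P := by
            rw [hident k, integral_map (hmeas 0).aemeasurable hexpm.aestronglyMeasurable]
        _ = 1 := hmgf
  have hsum_int : ∀ s : Finset ℕ, Integrable (fun x => Real.exp (ω₀ * ∑ k ∈ s, Z k x)) P := by
    intro s
    have := hindep.integrable_exp_mul_sum (t := ω₀) hmeas (s := s) (fun i _ => (key i).1)
    simpa [Finset.sum_apply] using this
  have hsum_mean : ∀ s : Finset ℕ, ∫ x, Real.exp (ω₀ * ∑ k ∈ s, Z k x) ∂P = 1 := by
    intro s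
    have h := hindep.mgf_sum (t := ω₀) hmeas s
    have h2 : ∀ i, mgf (Z i) P ω₀ = 1 := fun i => (key i).2
    simp only [h2, Finset.prod_const_one] at h
    rw [← h]
    simp [mgf, Finset.sum_apply]
  -- Step 2: the exponential martingale
  set hZsm : ∀ n, StronglyMeasurable (Z n) := fun n => (hmeas n).stronglyMeasurable with hZsmdef
  set ℱ : Filtration ℕ ‹MeasurableSpace Ω› := Filtration.natural Z hZsm with hℱdef
  set f : ℕ → Ω → ℝ := fun n x => Real.exp (ω₀ * ∑ k ∈ Finset.range (n+1), Z k x) with hfdef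
  have hadap : StronglyAdapted ℱ f := by
    intro n
    have hZm : ∀ k ∈ Finset.range (n+1), Measurable[ℱ n] (Z k) := by
      intro k hk
      rw [Finset.mem_range_succ_iff] at hk
      exact ((Filtration.stronglyAdapted_natural hZsm k).mono (ℱ.mono hk)).measurable
    exact (((Finset.measurable_sum _ hZm).const_mul ω₀).exp).stronglyMeasurable
  have hmart : Martingale f ℱ P := by
    refine ⟨hadap, fun i j hij => ?_⟩
    set h : Ω → ℝ := fun x => Real.exp (ω₀ * ∑ k ∈ Finset.Ico (i+1) (j+1), Z k x) with hhdef
    have hsplit : f j = f i * h := by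
      funext x
      simp only [hfdef, hhdef, Pi.mul_apply, ← Real.exp_add, ← mul_add]
      rw [Finset.range_eq_Ico,
        ← Finset.sum_Ico_consecutive (fun k => Z k x) (Nat.zero_le (i+1)) (by omega : i+1 ≤ j+1), Finset.range_eq_Ico]
    have hm1le : (⨆ k ∈ {k : ℕ | i < k}, MeasurableSpace.comap (Z k) inferInstance) ≤
        ‹MeasurableSpace Ω› :=
      iSup₂_le fun k _ => (hmeas k).comap_le
    have hindep2 : Indep (⨆ k ∈ {k : ℕ | i < k}, MeasurableSpace.comap (Z k) inferInstance)
        (ℱ i) P := by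
      have : Indep (⨆ k ∈ {k : ℕ | i < k}, MeasurableSpace.comap (Z k) inferInstance)
          (⨆ k ∈ {k : ℕ | k ≤ i}, MeasurableSpace.comap (Z k) inferInstance) P := by
        refine indep_iSup_of_disjoint (fun k => (hmeas k).comap_le) hindep ?_
        rw [Set.disjoint_left]
        intro k h1 h2
        exact absurd (show k ≤ i from h2) (not_le.2 (show i < k from h1))
      exact this
    have hhSM : StronglyMeasurable[⨆ k ∈ {k : ℕ | i < k},
        MeasurableSpace.comap (Z k) inferInstance] h := by
      have hZm : ∀ k ∈ Finset.Ico (i+1) (j+1),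
          Measurable[⨆ k ∈ {k : ℕ | i < k}, MeasurableSpace.comap (Z k) inferInstance] (Z k) := by
        intro k hk
        have hik : i < k := (Finset.mem_Ico.1 hk).1
        have hmk : Measurable[MeasurableSpace.comap (Z k) inferInstance] (Z k) :=
          measurable_iff_comap_le.2 le_rfl
        exact hmk.mono
          (le_iSup₂ (f := fun k _ => MeasurableSpace.comap (Z k) inferInstance) k hik) le_rfl
      exact (((Finset.measurable_sum _ hZm).const_mul ω₀).exp).stronglyMeasurable
    have hcond : P[h | ℱ i] =ᵐ[P] fun _ => (1 : ℝ) := by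
      refine (condExp_indep_eq hm1le (ℱ.le i) hhSM hindep2).trans ?_
      rw [hhdef, hsum_mean (Finset.Ico (i+1) (j+1))]
    have hmul : P[f i * h | ℱ i] =ᵐ[P] f i * P[h | ℱ i] :=
      condExp_mul_of_stronglyMeasurable_left (hadap i) (hsplit ▸ hsum_int (Finset.range (j+1)))
        (hsum_int (Finset.Ico (i+1) (j+1)))
    calc P[f j | ℱ i] = P[f i * h | ℱ i] := by rw [hsplit]
      _ =ᵐ[P] f i * P[h | ℱ i] := hmul
      _ =ᵐ[P] f i := by
          filter_upwards [hcond] with x hx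
          simp [hx]
  -- Step 3: Doob's maximal inequality and passage to the limit
  set ε : ℝ≥0 := Real.toNNReal (Real.exp (ω₀ * c)) with hε
  have hεcoe : (ε : ℝ) = Real.exp (ω₀ * c) := Real.coe_toNNReal _ (Real.exp_nonneg _)
  set A : ℕ → Set Ω := fun N =>
    {x | (ε : ℝ) ≤ (Finset.range (N+1)).sup' Finset.nonempty_range_add_one fun k => f k x} with hA
  have hfnonneg : 0 ≤ f := fun n x => (Real.exp_pos _).le
  have hset : {x | ∃ n : ℕ, c ≤ ∑ k ∈ Finset.range n, Z k x} = ⋃ N, A N := by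
    ext x
    simp only [Set.mem_setOf_eq, Set.mem_iUnion, hA]
    constructor
    · rintro ⟨n, hn⟩
      match n, hn with
      | 0, hn => simp at hn; linarith
      | (m+1), hn =>
        refine ⟨m, ?_⟩
        have h1 : (ε : ℝ) ≤ f m x := by
          rw [hεcoe, hfdef]
          exact Real.exp_le_exp.2 (mul_le_mul_of_nonneg_left hn hω₀.le)
        exact h1.trans (Finset.le_sup' (fun k => f k x) (Finset.self_mem_range_succ m))
    · rintro ⟨N, hN⟩
      rw [Finset.le_sup'_iff] at hN
      obtain ⟨k, -, hk⟩ := hN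
      refine ⟨k + 1, ?_⟩
      rw [hεcoe, hfdef, Real.exp_le_exp] at hk
      exact le_of_mul_le_mul_left hk hω₀
  have hfmean : ∀ n, ∫ x, f n x ∂P = 1 := fun n => hsum_mean (Finset.range (n+1))
  have hbound : ∀ N, P (A N) ≤ ENNReal.ofReal (Real.exp (-ω₀ * c)) := by
    intro N
    have h1 := maximal_ineq hmart.submartingale hfnonneg (ε := ε) N
    have h2 : ∫ x in A N, f N x ∂P ≤ ∫ x, f N x ∂P :=
      setIntegral_le_integral (hmart.integrable N)
        (Filter.Eventually.of_forall fun x => hfnonneg N x)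
    have h3 : (ε : ℝ≥0∞) * P (A N) ≤ 1 := by
      calc (ε : ℝ≥0∞) * P (A N) ≤ ENNReal.ofReal (∫ x in A N, f N x ∂P) := h1
        _ ≤ ENNReal.ofReal (∫ x, f N x ∂P) := ENNReal.ofReal_le_ofReal h2
        _ = 1 := by rw [hfmean N]; simp
    have h4 : P (A N) ≤ (ε : ℝ≥0∞)⁻¹ := by
      rw [ENNReal.le_inv_iff_mul_le, mul_comm]
      exact h3
    refine h4.trans_eq ?_
    rw [neg_mul, Real.exp_neg, ENNReal.ofReal_inv_of_pos (Real.exp_pos _)]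
    congr 1
  rw [hset]
  have hmono : Monotone A := by
    intro N M hNM x hx
    exact le_trans hx (Finset.sup'_mono (fun k => f k x)
      (Finset.range_subset_range.2 (by omega)) Finset.nonempty_range_add_one)
  rw [hmono.measure_iUnion]
  exact iSup_le hbound
end

section
/- If Z₁, Z₂, … are i.i.d. with E[exp(ω₀ Z₁)] = 1 for some ω₀ ∈ (0,1) and E[Z₁] < 0, and τ = inf{k : C_k ≥ c} where C_k is the CUSUM statistic built from the Z's, then E[τ] ≥ exp(ω₀ c). -/
open MeasureTheory ProbabilityTheory
open scoped ENNReal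

/-- Auxiliary recursively-defined CUSUM functional on a finite tuple of increments. -/
def cusumAux (t : ℕ) (v : {x // x ∈ Finset.range t} → ℝ) : ℕ → ℝ
  | 0 => 0
  | j + 1 => max 0 (cusumAux t v j + if h : j ∈ Finset.range t then v ⟨j, h⟩ else 0)

lemma measurable_cusumAux (t j : ℕ) : Measurable (fun v => cusumAux t v j) := by
  induction j with
  | zero => simpa [cusumAux] using measurable_const
  | succ j ih =>
    simp only [cusumAux]
    by_cases h : j ∈ Finset.range t
    · simp only [h, dif_pos]
      exact measurable_const.max (ih.add (measurable_pi_apply _))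
    · simp only [h, dif_neg, not_false_iff]
      exact measurable_const.max (ih.add measurable_const)

/-- Auxiliary partial-sum functional on a finite tuple. -/
def sumAux (s : Finset ℕ) (a b : ℕ) (v : {x // x ∈ s} → ℝ) : ℝ :=
  ∑ i ∈ Finset.Ico a b, if h : i ∈ s then v ⟨i, h⟩ else 0

lemma measurable_sumAux (s : Finset ℕ) (a b : ℕ) : Measurable (sumAux s a b) := by
  apply Finset.measurable_sum
  intro i _
  by_cases h : i ∈ s
  · simp only [h, dif_pos]; exact measurable_pi_apply _
  · simp only [h, dif_neg, not_false_iff]; exact measurable_const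

/-- If the i.i.d. CUSUM increments `Z` have negative mean and satisfy
`E[exp(ω₀ Z₁)] = 1` for some `ω₀ ∈ (0,1)`, then the first time `τ` at which
the CUSUM statistic reaches the threshold `c > 0` satisfies
`E[τ] ≥ exp(ω₀ c)`. -/
theorem cusum_mean_crossing_time_lower_bound
    {Ω : Type*} [MeasurableSpace Ω] (P : Measure Ω) [IsProbabilityMeasure P]
    (Z : ℕ → Ω → ℝ) (hmeas : ∀ n, Measurable (Z n))
    (hindep : iIndepFun Z P)
    (hident : ∀ n, P.map (Z n) = P.map (Z 0))
    (hint : Integrable (Z 0) P) (hmean : ∫ x, Z 0 x ∂P < 0)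
    (ω₀ : ℝ) (hω₀ : 0 < ω₀) (hω₀' : ω₀ < 1)
    (hmgf : ∫ x, Real.exp (ω₀ * Z 0 x) ∂P = 1)
    (C : ℕ → Ω → ℝ)
    (hC0 : ∀ x, C 0 x = 0)
    (hCrec : ∀ k x, C (k + 1) x = max 0 (C k x + Z k x))
    (c : ℝ) (hc : 0 < c)
    (τ : Ω → ℝ≥0∞)
    (hτ : ∀ x, τ x = sInf ((fun k : ℕ => (k : ℝ≥0∞)) '' {k | c ≤ C k x})) :
    ENNReal.ofReal (Real.exp (ω₀ * c)) ≤ ∫⁻ x, τ x ∂P := by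
  classical
  -- measurability of the CUSUM process
  have hCmeas : ∀ k, Measurable (C k) := by
    intro k
    induction k with
    | zero =>
      have h : C 0 = fun _ => (0 : ℝ) := funext hC0
      rw [h]; exact measurable_const
    | succ k ih =>
      have h : C (k + 1) = fun x => max 0 (C k x + Z k x) := funext (hCrec k)
      rw [h]; exact measurable_const.max (ih.add (hmeas k))
  -- exponential increments
  set g : ℕ → Ω → ℝ := fun i ω => Real.exp (ω₀ * Z i ω) with hgdef
  have hgmeas : ∀ i, Measurable (g i) := fun i => (measurable_const.mul (hmeas i)).exp
  have hgnn : ∀ i ω, 0 ≤ g i ω := fun i ω => (Real.exp_pos _).le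
  have hg0int : Integrable (g 0) P := by
    by_contra h
    rw [integral_undef h] at hmgf
    norm_num at hmgf
  have hexpm : Measurable fun x : ℝ => Real.exp (ω₀ * x) :=
    (measurable_const.mul measurable_id).exp
  have hgint : ∀ i, Integrable (g i) P := by
    intro i
    have h0 : Integrable (fun x : ℝ => Real.exp (ω₀ * x)) (P.map (Z 0)) := by
      rw [integrable_map_measure hexpm.aestronglyMeasurable (hmeas 0).aemeasurable]
      exact hg0int
    have hi : Integrable (fun x : ℝ => Real.exp (ω₀ * x)) (P.map (Z i)) := by
      rw [hident i]; exact h0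
    rw [integrable_map_measure hexpm.aestronglyMeasurable (hmeas i).aemeasurable] at hi
    exact hi
  have hgmean : ∀ i, ∫ ω, g i ω ∂P = 1 := by
    intro i
    calc ∫ ω, g i ω ∂P
        = ∫ x, Real.exp (ω₀ * x) ∂(P.map (Z i)) :=
          (integral_map (hmeas i).aemeasurable hexpm.aestronglyMeasurable).symm
      _ = ∫ x, Real.exp (ω₀ * x) ∂(P.map (Z 0)) := by rw [hident i]
      _ = ∫ x, Real.exp (ω₀ * Z 0 x) ∂P :=
          integral_map (hmeas 0).aemeasurable hexpm.aestronglyMeasurable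
      _ = 1 := hmgf
  -- independence transfer through tuples
  have hIndepC : ∀ (S T : Finset ℕ), Disjoint S T → ∀ (F G : Ω → ℝ)
      (φ : ({x // x ∈ S} → ℝ) → ℝ) (ψ : ({x // x ∈ T} → ℝ) → ℝ),
      Measurable φ → Measurable ψ →
      (∀ ω, F ω = φ (fun i => Z i.1 ω)) → (∀ ω, G ω = ψ (fun i => Z i.1 ω)) →
      IndepFun F G P := by
    intro S T hST F G φ ψ hφ hψ hF hG
    have h := (hindep.indepFun_finset S T hST hmeas).comp hφ hψ
    have hF' : F = φ ∘ fun ω (i : {x // x ∈ S}) => Z i.1 ω := funext hF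
    have hG' : G = ψ ∘ fun ω (i : {x // x ∈ T}) => Z i.1 ω := funext hG
    rw [hF', hG']; exact h
  -- products of exponential increments over blocks are integrable with mean one
  have hprod : ∀ (n a : ℕ),
      Integrable (fun ω => ∏ i ∈ Finset.Ico a (a + n), g i ω) P ∧
      ∫ ω, ∏ i ∈ Finset.Ico a (a + n), g i ω ∂P = 1 := by
    intro n
    induction n with
    | zero =>
      intro a
      simp only [Nat.add_zero, Finset.Ico_self, Finset.prod_empty]
      exact ⟨integrable_const 1, by simp⟩
    | succ n ih =>
      intro a
      have hsplit : (fun ω => ∏ i ∈ Finset.Ico a (a + (n + 1)), g i ω)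
          = fun ω => (∏ i ∈ Finset.Ico a (a + n), g i ω) * g (a + n) ω := by
        funext ω
        exact Finset.prod_Ico_succ_top (Nat.le_add_right a n) _
      have hind : IndepFun (fun ω => ∏ i ∈ Finset.Ico a (a + n), g i ω) (g (a + n)) P := by
        refine hIndepC (Finset.Ico a (a + n)) {a + n}
          (by simp [Finset.disjoint_singleton_right]) _ _
          (fun v => ∏ i : {x // x ∈ Finset.Ico a (a + n)}, Real.exp (ω₀ * v i))
          (fun v => Real.exp (ω₀ * v ⟨a + n, Finset.mem_singleton_self _⟩))
          ?_ ?_ ?_ ?_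
        · exact Finset.univ.measurable_prod fun i _ =>
            (measurable_const.mul (measurable_pi_apply i)).exp
        · exact (measurable_const.mul (measurable_pi_apply _)).exp
        · intro ω
          exact (Finset.prod_coe_sort (Finset.Ico a (a + n)) (fun i => g i ω)).symm
        · intro ω; rfl
      refine ⟨?_, ?_⟩
      · rw [hsplit]
        exact hind.integrable_mul (ih a).1 (hgint (a + n))
      · rw [hsplit]
        have hm := hind.integral_mul_eq_mul_integral (ih a).1.aestronglyMeasurable (hgint (a + n)).aestronglyMeasurable
        calc ∫ ω, (∏ i ∈ Finset.Ico a (a + n), g i ω) * g (a + n) ω ∂P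
            = (∫ ω, ∏ i ∈ Finset.Ico a (a + n), g i ω ∂P) * ∫ ω, g (a + n) ω ∂P := hm
          _ = 1 := by rw [(ih a).2, hgmean]; norm_num
  -- partial sums
  set Sm : ℕ → ℕ → Ω → ℝ := fun t m ω => ∑ i ∈ Finset.Ico t (t + m), Z i ω with hSmdef
  have hSmmeas : ∀ t m, Measurable (Sm t m) := fun t m =>
    Finset.measurable_sum _ fun i _ => hmeas i
  have hexpSm : ∀ t m ω, Real.exp (ω₀ * Sm t m ω) = ∏ i ∈ Finset.Ico t (t + m), g i ω := by
    intro t m ω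
    simp only [hSmdef, hgdef]
    rw [Finset.mul_sum, Real.exp_sum]
  -- the events
  set Bm : ℕ → ℕ → Set Ω :=
    fun t m => {ω | c ≤ Sm t m ω ∧ ∀ j < m, ¬ c ≤ Sm t j ω} with hBmdef
  set Bset : ℕ → ℕ → Set Ω :=
    fun t N => {ω | ∃ m, 1 ≤ m ∧ m ≤ N ∧ c ≤ Sm t m ω} with hBsetdef
  set Aset : ℕ → Set Ω := fun t => {ω | ∃ m, 1 ≤ m ∧ c ≤ Sm t m ω} with hAsetdef
  set Dset : ℕ → Set Ω := fun t => {ω | C t ω = 0 ∧ ∀ j ≤ t, ¬ c ≤ C j ω} with hDsetdef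
  have hBm_meas : ∀ t m, MeasurableSet (Bm t m) := by
    intro t m
    have h : Bm t m = {ω | c ≤ Sm t m ω} ∩ ⋂ j, ⋂ _ : j < m, {ω | c ≤ Sm t j ω}ᶜ := by
      ext ω; simp only [hBmdef, Set.mem_setOf_eq, Set.mem_inter_iff, Set.mem_iInter,
        Set.mem_compl_iff]
    rw [h]
    exact (measurableSet_le measurable_const (hSmmeas t m)).inter
      (MeasurableSet.iInter fun j => MeasurableSet.iInter fun _ =>
        (measurableSet_le measurable_const (hSmmeas t j)).compl)
  have hBset_meas : ∀ t N, MeasurableSet (Bset t N) := by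
    intro t N
    have h : Bset t N = ⋃ m, ⋃ _ : 1 ≤ m, ⋃ _ : m ≤ N, {ω | c ≤ Sm t m ω} := by
      ext ω; simp only [hBsetdef, Set.mem_setOf_eq, Set.mem_iUnion]
      constructor
      · rintro ⟨m, h1, h2, h3⟩; exact ⟨m, h1, h2, h3⟩
      · rintro ⟨m, h1, h2, h3⟩; exact ⟨m, h1, h2, h3⟩
    rw [h]
    exact MeasurableSet.iUnion fun m => MeasurableSet.iUnion fun _ =>
      MeasurableSet.iUnion fun _ => measurableSet_le measurable_const (hSmmeas t m)
  have hDmeas : ∀ t, MeasurableSet (Dset t) := by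
    intro t
    have h : Dset t = {ω | C t ω = 0} ∩ ⋂ j, ⋂ _ : j ≤ t, {ω | c ≤ C j ω}ᶜ := by
      ext ω; simp only [hDsetdef, Set.mem_setOf_eq, Set.mem_inter_iff, Set.mem_iInter,
        Set.mem_compl_iff]
    rw [h]
    exact (hCmeas t (measurableSet_singleton 0)).inter
      (MeasurableSet.iInter fun j => MeasurableSet.iInter fun _ =>
        (measurableSet_le measurable_const (hCmeas j)).compl)
  -- Chernoff / Ville bound for the per-block crossing probability
  have hChernoff : ∀ t N, P (Bset t N) ≤ ENNReal.ofReal (Real.exp (-(ω₀ * c))) := by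
    intro t N
    have hBcover : Bset t N = ⋃ m ∈ Finset.Icc 1 N, Bm t m := by
      ext ω
      simp only [hBsetdef, hBmdef, Set.mem_setOf_eq, Set.mem_iUnion, Finset.mem_Icc,
        exists_prop]
      constructor
      · rintro ⟨m, hm1, hmN, hcm⟩
        have hex : ∃ m, c ≤ Sm t m ω := ⟨m, hcm⟩
        refine ⟨Nat.find hex, ⟨?_, ?_⟩, Nat.find_spec hex, fun j hj => Nat.find_min hex hj⟩
        · rcases Nat.eq_zero_or_pos (Nat.find hex) with h0 | h0
          · exfalso
            have hs := Nat.find_spec hex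
            rw [h0] at hs
            simp only [hSmdef, Nat.add_zero, Finset.Ico_self, Finset.sum_empty] at hs
            linarith
          · exact h0
        · exact (Nat.find_min' hex hcm).trans hmN
      · rintro ⟨m, ⟨hm1, hmN⟩, hcm, _⟩
        exact ⟨m, hm1, hmN, hcm⟩
    have hdisj : (↑(Finset.Icc 1 N) : Set ℕ).PairwiseDisjoint (Bm t) := by
      intro m _ m' _ hne
      refine Set.disjoint_left.mpr fun ω hω hω' => ?_
      simp only [hBmdef, Set.mem_setOf_eq] at hω hω'
      rcases lt_or_gt_of_ne hne with h | h
      · exact hω'.2 m h hω.1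
      · exact hω.2 m' h hω'.1
    have hPBsum : P (Bset t N) = ∑ m ∈ Finset.Icc 1 N, P (Bm t m) := by
      rw [hBcover]
      exact measure_biUnion_finset hdisj fun m _ => hBm_meas t m
    have hkey : ∀ m ∈ Finset.Icc 1 N, Real.exp (ω₀ * c) * (P (Bm t m)).toReal
        ≤ ∫ ω, Set.indicator (Bm t m) (fun ω => ∏ i ∈ Finset.Ico t (t + N), g i ω) ω ∂P := by
      intro m hm
      rw [Finset.mem_Icc] at hm
      obtain ⟨hm1, hmN⟩ := hm
      have hEsplit : ∀ ω, (∏ i ∈ Finset.Ico t (t + N), g i ω)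
          = (∏ i ∈ Finset.Ico t (t + m), g i ω) *
            ∏ i ∈ Finset.Ico (t + m) (t + N), g i ω := by
        intro ω
        rw [Finset.prod_Ico_consecutive _ (Nat.le_add_right t m) (by omega)]
      have hFdef : ∀ ω, Set.indicator (Bm t m) (fun ω => ∏ i ∈ Finset.Ico t (t + N), g i ω) ω
          = Set.indicator (Bm t m) (fun ω => ∏ i ∈ Finset.Ico t (t + m), g i ω) ω *
            ∏ i ∈ Finset.Ico (t + m) (t + N), g i ω := by
        intro ω
        by_cases hω : ω ∈ Bm t m
        · rw [Set.indicator_of_mem hω, Set.indicator_of_mem hω, hEsplit]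
        · rw [Set.indicator_of_notMem hω, Set.indicator_of_notMem hω, zero_mul]
      have hind : IndepFun
          (Set.indicator (Bm t m) (fun ω => ∏ i ∈ Finset.Ico t (t + m), g i ω))
          (fun ω => ∏ i ∈ Finset.Ico (t + m) (t + N), g i ω) P := by
        refine hIndepC (Finset.Ico t (t + m)) (Finset.Ico (t + m) (t + N))
          (Finset.Ico_disjoint_Ico_consecutive t (t + m) (t + N)) _ _
          (fun v => Set.indicator
            {v : {x // x ∈ Finset.Ico t (t + m)} → ℝ |
              c ≤ sumAux (Finset.Ico t (t + m)) t (t + m) v ∧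
              ∀ j < m, ¬ c ≤ sumAux (Finset.Ico t (t + m)) t (t + j) v}
            (fun v => ∏ i : {x // x ∈ Finset.Ico t (t + m)}, Real.exp (ω₀ * v i)) v)
          (fun v => ∏ i : {x // x ∈ Finset.Ico (t + m) (t + N)}, Real.exp (ω₀ * v i))
          ?_ ?_ ?_ ?_
        · refine Measurable.indicator
            (Finset.univ.measurable_prod fun i _ =>
              (measurable_const.mul (measurable_pi_apply i)).exp) ?_
          have h : {v : {x // x ∈ Finset.Ico t (t + m)} → ℝ |
              c ≤ sumAux (Finset.Ico t (t + m)) t (t + m) v ∧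
              ∀ j < m, ¬ c ≤ sumAux (Finset.Ico t (t + m)) t (t + j) v}
              = {v | c ≤ sumAux (Finset.Ico t (t + m)) t (t + m) v} ∩
                ⋂ j, ⋂ _ : j < m, {v | c ≤ sumAux (Finset.Ico t (t + m)) t (t + j) v}ᶜ := by
            ext v
            simp only [Set.mem_setOf_eq, Set.mem_inter_iff, Set.mem_iInter,
              Set.mem_compl_iff]
          rw [h]
          exact (measurableSet_le measurable_const (measurable_sumAux _ _ _)).inter
            (MeasurableSet.iInter fun j => MeasurableSet.iInter fun _ =>
              (measurableSet_le measurable_const (measurable_sumAux _ _ _)).compl)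
        · exact Finset.univ.measurable_prod fun i _ =>
            (measurable_const.mul (measurable_pi_apply i)).exp
        · intro ω
          have hsum : ∀ j, j ≤ m →
              sumAux (Finset.Ico t (t + m)) t (t + j)
                (fun i : {x // x ∈ Finset.Ico t (t + m)} => Z i.1 ω) = Sm t j ω := by
            intro j hj
            simp only [sumAux, hSmdef]
            refine Finset.sum_congr rfl fun i hi => ?_
            have hiM : i ∈ Finset.Ico t (t + m) := by
              rw [Finset.mem_Ico] at hi ⊢
              omega
            rw [dif_pos hiM]
          have hmem : ((fun i : {x // x ∈ Finset.Ico t (t + m)} => Z i.1 ω) ∈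
              {v : {x // x ∈ Finset.Ico t (t + m)} → ℝ |
                c ≤ sumAux (Finset.Ico t (t + m)) t (t + m) v ∧
                ∀ j < m, ¬ c ≤ sumAux (Finset.Ico t (t + m)) t (t + j) v}) ↔
              ω ∈ Bm t m := by
            simp only [hBmdef, Set.mem_setOf_eq, hsum m le_rfl]
            constructor
            · rintro ⟨h1, h2⟩
              exact ⟨h1, fun j hj => by rw [← hsum j hj.le]; exact h2 j hj⟩
            · rintro ⟨h1, h2⟩
              exact ⟨h1, fun j hj => by rw [hsum j hj.le]; exact h2 j hj⟩
          beta_reduce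
          by_cases hω : ω ∈ Bm t m
          · rw [Set.indicator_of_mem hω, Set.indicator_of_mem (hmem.mpr hω)]
            exact (Finset.prod_coe_sort (Finset.Ico t (t + m)) (fun i => g i ω)).symm
          · rw [Set.indicator_of_notMem hω,
              Set.indicator_of_notMem (fun hcon => hω (hmem.mp hcon))]
        · intro ω
          exact (Finset.prod_coe_sort (Finset.Ico (t + m) (t + N)) (fun i => g i ω)).symm
      have hEmint : Integrable (fun ω => ∏ i ∈ Finset.Ico t (t + m), g i ω) P :=
        (hprod m t).1
      have hFint : Integrable
          (Set.indicator (Bm t m) fun ω => ∏ i ∈ Finset.Ico t (t + m), g i ω) P :=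
        hEmint.indicator (hBm_meas t m)
      have hGint : Integrable (fun ω => ∏ i ∈ Finset.Ico (t + m) (t + N), g i ω) P := by
        have h := (hprod (N - m) (t + m)).1
        rwa [show t + m + (N - m) = t + N by omega] at h
      have hGmean : ∫ ω, (∏ i ∈ Finset.Ico (t + m) (t + N), g i ω) ∂P = 1 := by
        have h := (hprod (N - m) (t + m)).2
        rwa [show t + m + (N - m) = t + N by omega] at h
      have h1 : ∫ ω, Set.indicator (Bm t m)
            (fun ω => ∏ i ∈ Finset.Ico t (t + N), g i ω) ω ∂P
          = ∫ ω, Set.indicator (Bm t m)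
            (fun ω => ∏ i ∈ Finset.Ico t (t + m), g i ω) ω ∂P := by
        rw [show (fun ω => Set.indicator (Bm t m)
              (fun ω => ∏ i ∈ Finset.Ico t (t + N), g i ω) ω)
            = fun ω => Set.indicator (Bm t m)
              (fun ω => ∏ i ∈ Finset.Ico t (t + m), g i ω) ω *
              ∏ i ∈ Finset.Ico (t + m) (t + N), g i ω from funext hFdef]
        have hmul : ∫ ω, Set.indicator (Bm t m)
              (fun ω => ∏ i ∈ Finset.Ico t (t + m), g i ω) ω *
              ∏ i ∈ Finset.Ico (t + m) (t + N), g i ω ∂P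
            = (∫ ω, Set.indicator (Bm t m)
                (fun ω => ∏ i ∈ Finset.Ico t (t + m), g i ω) ω ∂P) *
              ∫ ω, ∏ i ∈ Finset.Ico (t + m) (t + N), g i ω ∂P :=
          hind.integral_mul_eq_mul_integral hFint.aestronglyMeasurable hGint.aestronglyMeasurable
        rw [hmul, hGmean, mul_one]
      rw [h1]
      have hpt : ∀ ω, Set.indicator (Bm t m) (fun _ => Real.exp (ω₀ * c)) ω
          ≤ Set.indicator (Bm t m) (fun ω => ∏ i ∈ Finset.Ico t (t + m), g i ω) ω := by
        intro ω
        by_cases hω : ω ∈ Bm t m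
        · rw [Set.indicator_of_mem hω, Set.indicator_of_mem hω, ← hexpSm]
          apply Real.exp_le_exp.mpr
          have hcm : c ≤ Sm t m ω := by
            have hω' := hω
            simp only [hBmdef, Set.mem_setOf_eq] at hω'
            exact hω'.1
          exact mul_le_mul_of_nonneg_left hcm hω₀.le
        · rw [Set.indicator_of_notMem hω, Set.indicator_of_notMem hω]
      have hmono := integral_mono
        ((integrable_const (Real.exp (ω₀ * c))).indicator (hBm_meas t m)) hFint hpt
      rwa [integral_indicator_const _ (hBm_meas t m), smul_eq_mul, mul_comm] at hmono
    have hsumle : ∑ m ∈ Finset.Icc 1 N,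
        ∫ ω, Set.indicator (Bm t m)
          (fun ω => ∏ i ∈ Finset.Ico t (t + N), g i ω) ω ∂P ≤ 1 := by
      rw [← integral_finset_sum _ fun m _ => ((hprod N t).1.indicator (hBm_meas t m))]
      have hmono : ∀ ω, ∑ m ∈ Finset.Icc 1 N,
          Set.indicator (Bm t m) (fun ω => ∏ i ∈ Finset.Ico t (t + N), g i ω) ω
          ≤ ∏ i ∈ Finset.Ico t (t + N), g i ω := by
        intro ω
        by_cases hex : ∃ m₀ ∈ Finset.Icc 1 N, ω ∈ Bm t m₀
        · obtain ⟨m₀, hm₀, hωm₀⟩ := hex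
          have hsum0 : ∑ m ∈ Finset.Icc 1 N,
              Set.indicator (Bm t m) (fun ω => ∏ i ∈ Finset.Ico t (t + N), g i ω) ω
              = Set.indicator (Bm t m₀)
                (fun ω => ∏ i ∈ Finset.Ico t (t + N), g i ω) ω :=
            Finset.sum_eq_single_of_mem m₀ hm₀ fun b hb hbne =>
              Set.indicator_of_notMem (fun hωb =>
                Set.disjoint_left.mp
                  (hdisj (Finset.mem_coe.mpr hb) (Finset.mem_coe.mpr hm₀) hbne)
                  hωb hωm₀) _
          rw [hsum0, Set.indicator_of_mem hωm₀]
        · push_neg at hex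
          rw [Finset.sum_eq_zero fun m hm => Set.indicator_of_notMem (hex m hm) _]
          exact Finset.prod_nonneg fun i _ => hgnn i ω
      calc ∫ ω, (∑ m ∈ Finset.Icc 1 N,
            Set.indicator (Bm t m) (fun ω => ∏ i ∈ Finset.Ico t (t + N), g i ω) ω) ∂P
          ≤ ∫ ω, ∏ i ∈ Finset.Ico t (t + N), g i ω ∂P :=
            integral_mono (integrable_finset_sum _ fun m _ =>
              (hprod N t).1.indicator (hBm_meas t m)) (hprod N t).1 hmono
        _ = 1 := (hprod N t).2
    have hfinal : Real.exp (ω₀ * c) * (P (Bset t N)).toReal ≤ 1 := by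
      have htr : (P (Bset t N)).toReal = ∑ m ∈ Finset.Icc 1 N, (P (Bm t m)).toReal := by
        rw [hPBsum, ENNReal.toReal_sum fun m _ => measure_ne_top P _]
      rw [htr, Finset.mul_sum]
      exact le_trans (Finset.sum_le_sum hkey) hsumle
    rw [ENNReal.le_ofReal_iff_toReal_le (measure_ne_top P _) (Real.exp_nonneg _)]
    have hx := Real.exp_pos (ω₀ * c)
    rw [Real.exp_neg, inv_eq_one_div, le_div_iff₀ hx, mul_comm]
    exact hfinal
  -- independence of past event and future crossing
  have hDB : ∀ t N, P (Dset t ∩ Bset t N) = P (Dset t) * P (Bset t N) := by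
    intro t N
    have hdisjST : Disjoint (Finset.range t) (Finset.Ico t (t + N)) := by
      rw [Finset.disjoint_left]
      intro a ha ha'
      rw [Finset.mem_range] at ha
      rw [Finset.mem_Ico] at ha'
      omega
    have hIF := hindep.indepFun_finset (Finset.range t) (Finset.Ico t (t + N)) hdisjST hmeas
    set sD : Set ({x // x ∈ Finset.range t} → ℝ) :=
      {v | cusumAux t v t = 0 ∧ ∀ j ≤ t, ¬ c ≤ cusumAux t v j} with hsDdef
    set sB : Set ({x // x ∈ Finset.Ico t (t + N)} → ℝ) :=
      ⋃ m, ⋃ _ : 1 ≤ m, ⋃ _ : m ≤ N,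
        {v | c ≤ sumAux (Finset.Ico t (t + N)) t (t + m) v} with hsBdef
    have hsDmeas : MeasurableSet sD := by
      have h : sD = {v | cusumAux t v t = 0} ∩
          ⋂ j, ⋂ _ : j ≤ t, {v | c ≤ cusumAux t v j}ᶜ := by
        ext v
        simp only [hsDdef, Set.mem_setOf_eq, Set.mem_inter_iff, Set.mem_iInter,
          Set.mem_compl_iff]
      rw [h]
      exact ((measurable_cusumAux t t) (measurableSet_singleton 0)).inter
        (MeasurableSet.iInter fun j => MeasurableSet.iInter fun _ =>
          (measurableSet_le measurable_const (measurable_cusumAux t j)).compl)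
    have hsBmeas : MeasurableSet sB := by
      rw [hsBdef]
      exact MeasurableSet.iUnion fun m => MeasurableSet.iUnion fun _ =>
        MeasurableSet.iUnion fun _ =>
          measurableSet_le measurable_const (measurable_sumAux _ _ _)
    have hCre : ∀ ω (j : ℕ), j ≤ t →
        cusumAux t (fun i : {x // x ∈ Finset.range t} => Z i.1 ω) j = C j ω := by
      intro ω j
      induction j with
      | zero => intro _; simp [cusumAux, hC0]
      | succ j ih =>
        intro hj
        have hjt : j ∈ Finset.range t := Finset.mem_range.mpr (by omega)
        rw [hCrec]
        simp only [cusumAux, dif_pos hjt]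
        rw [ih (by omega)]
    have hXD : (fun ω (i : {x // x ∈ Finset.range t}) => Z i.1 ω) ⁻¹' sD = Dset t := by
      ext ω
      simp only [Set.mem_preimage, hsDdef, Set.mem_setOf_eq, hDsetdef]
      constructor
      · rintro ⟨h1, h2⟩
        exact ⟨by rw [← hCre ω t le_rfl]; exact h1,
          fun j hj => by rw [← hCre ω j hj]; exact h2 j hj⟩
      · rintro ⟨h1, h2⟩
        exact ⟨by rw [hCre ω t le_rfl]; exact h1,
          fun j hj => by rw [hCre ω j hj]; exact h2 j hj⟩
    have hYB : (fun ω (i : {x // x ∈ Finset.Ico t (t + N)}) => Z i.1 ω) ⁻¹' sB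
        = Bset t N := by
      ext ω
      have hsum : ∀ m, m ≤ N →
          sumAux (Finset.Ico t (t + N)) t (t + m)
            (fun i : {x // x ∈ Finset.Ico t (t + N)} => Z i.1 ω) = Sm t m ω := by
        intro m hm
        simp only [sumAux, hSmdef]
        refine Finset.sum_congr rfl fun i hi => ?_
        have hiN : i ∈ Finset.Ico t (t + N) := by
          rw [Finset.mem_Ico] at hi ⊢
          omega
        rw [dif_pos hiN]
      simp only [Set.mem_preimage, hsBdef, Set.mem_iUnion, Set.mem_setOf_eq, hBsetdef]
      constructor
      · rintro ⟨m, hm1, hmN, hcm⟩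
        exact ⟨m, hm1, hmN, by rwa [hsum m hmN] at hcm⟩
      · rintro ⟨m, hm1, hmN, hcm⟩
        exact ⟨m, hm1, hmN, by rwa [hsum m hmN]⟩
    have h := hIF.measure_inter_preimage_eq_mul sD sB hsDmeas hsBmeas
    rw [← hXD, ← hYB]
    exact h
  -- covering of the crossing event by regeneration cycles
  have hcover : {ω | ∃ k, c ≤ C k ω} ⊆ ⋃ t, Dset t ∩ Aset t := by
    intro ω hω
    obtain ⟨k, hk⟩ := hω
    have hne : ∃ k, c ≤ C k ω := ⟨k, hk⟩
    have hk₀ : c ≤ C (Nat.find hne) ω := Nat.find_spec hne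
    set k₀ := Nat.find hne with hk₀def
    have hmin : ∀ j, j < k₀ → ¬ c ≤ C j ω := fun j hj => Nat.find_min hne hj
    have hk₀pos : 0 < k₀ := by
      rcases Nat.eq_zero_or_pos k₀ with h | h
      · exfalso
        rw [h, hC0] at hk₀
        linarith
      · exact h
    set t := Nat.findGreatest (fun s => C s ω = 0) (k₀ - 1) with htdef
    have ht0 : C t ω = 0 :=
      Nat.findGreatest_spec (P := fun s => C s ω = 0) (Nat.zero_le _) (hC0 ω)
    have htle : t ≤ k₀ - 1 := Nat.findGreatest_le (P := fun s => C s ω = 0) _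
    have hmax : ∀ j, t < j → j ≤ k₀ - 1 → ¬ C j ω = 0 := fun j hj hj' =>
      Nat.findGreatest_is_greatest (P := fun s => C s ω = 0) hj hj'
    have hCpos : ∀ j, t < j → j ≤ k₀ → 0 < C j ω := by
      intro j hj hjk
      have hjnn : 0 ≤ C j ω := by
        obtain ⟨j', rfl⟩ : ∃ j', j = j' + 1 := ⟨j - 1, by omega⟩
        rw [hCrec]
        exact le_max_left _ _
      rcases eq_or_lt_of_le hjk with h | h
      · rw [h]; exact lt_of_lt_of_le hc hk₀
      · exact lt_of_le_of_ne hjnn (Ne.symm (hmax j hj (by omega)))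
    have hsum : ∀ d, t + d ≤ k₀ → C (t + d) ω = Sm t d ω := by
      intro d
      induction d with
      | zero =>
        intro _
        simp only [hSmdef, Nat.add_zero, Finset.Ico_self, Finset.sum_empty]
        exact ht0
      | succ d ih =>
        intro hd
        have hd' : t + d ≤ k₀ := by omega
        have hpos : 0 < C (t + d + 1) ω := hCpos (t + d + 1) (by omega) (by omega)
        have hCs : C (t + d + 1) ω = C (t + d) ω + Z (t + d) ω := by
          rw [hCrec] at hpos ⊢
          rcases le_or_gt (C (t + d) ω + Z (t + d) ω) 0 with h | h
          · rw [max_eq_left h] at hpos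
            linarith
          · exact max_eq_right h.le
        rw [← add_assoc, hCs, ih hd']
        simp only [hSmdef]
        rw [← add_assoc, Finset.sum_Ico_succ_top (Nat.le_add_right t d)]
    refine Set.mem_iUnion.mpr ⟨t, ?_, ?_⟩
    · simp only [hDsetdef, Set.mem_setOf_eq]
      exact ⟨ht0, fun j hj => hmin j (by omega)⟩
    · simp only [hAsetdef, Set.mem_setOf_eq]
      refine ⟨k₀ - t, by omega, ?_⟩
      have h := hsum (k₀ - t) (by omega)
      rw [show t + (k₀ - t) = k₀ by omega] at h
      rw [← h]
      exact hk₀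
  -- characterization of {τ > t}
  have htgt : ∀ (t : ℕ) ω, ((t : ℝ≥0∞) < τ ω ↔ ∀ j ≤ t, ¬ c ≤ C j ω) := by
    intro t ω
    constructor
    · intro h j hj hcj
      have hle : τ ω ≤ (j : ℝ≥0∞) := by
        rw [hτ]
        exact sInf_le ⟨j, hcj, rfl⟩
      have h2 : (t : ℝ≥0∞) < (j : ℝ≥0∞) := lt_of_lt_of_le h hle
      have h3 : t < j := by exact_mod_cast h2
      omega
    · intro h
      rw [hτ]
      refine lt_of_lt_of_le (b := ((t + 1 : ℕ) : ℝ≥0∞)) ?_ (le_sInf ?_)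
      · exact_mod_cast Nat.lt_succ_self t
      · rintro b ⟨k, hk, rfl⟩
        have hk1 : t + 1 ≤ k := by
          by_contra hkt
          exact h k (by omega) hk
        show ((t + 1 : ℕ) : ℝ≥0∞) ≤ (k : ℝ≥0∞)
        exact_mod_cast hk1
  have hTgtmeas : ∀ t : ℕ, MeasurableSet {ω | (t : ℝ≥0∞) < τ ω} := by
    intro t
    have h : {ω | (t : ℝ≥0∞) < τ ω} = ⋂ j, ⋂ _ : j ≤ t, {ω | c ≤ C j ω}ᶜ := by
      ext ω
      simp only [Set.mem_setOf_eq, Set.mem_iInter, Set.mem_compl_iff]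
      exact htgt t ω
    rw [h]
    exact MeasurableSet.iInter fun j => MeasurableSet.iInter fun _ =>
      (measurableSet_le measurable_const (hCmeas j)).compl
  have hD_sub_Tgt : ∀ t, Dset t ⊆ {ω | (t : ℝ≥0∞) < τ ω} := by
    intro t ω hω
    rw [hDsetdef] at hω
    rw [Set.mem_setOf_eq, htgt t ω]
    exact hω.2
  -- expectation of τ as a tail sum
  have hlint : ∫⁻ ω, τ ω ∂P = ∑' (t : ℕ), P {ω | (t : ℝ≥0∞) < τ ω} := by
    have hτval : ∀ ω, τ ω = ∑' (t : ℕ),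
        Set.indicator {ω' | (t : ℝ≥0∞) < τ ω'} (fun _ => (1 : ℝ≥0∞)) ω := by
      intro ω
      by_cases hne : {k | c ≤ C k ω}.Nonempty
      · have hval : τ ω = (((sInf {k : ℕ | c ≤ C k ω} : ℕ)) : ℝ≥0∞) := by
          apply le_antisymm
          · rw [hτ]
            exact sInf_le ⟨_, Nat.sInf_mem hne, rfl⟩
          · rw [hτ]
            apply le_sInf
            rintro b ⟨k, hk, rfl⟩
            show (((sInf {k : ℕ | c ≤ C k ω} : ℕ)) : ℝ≥0∞) ≤ (k : ℝ≥0∞)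
            exact_mod_cast Nat.sInf_le hk
        set k₀ := (sInf {k : ℕ | c ≤ C k ω} : ℕ) with hk₀def
        have hz : ∀ t : ℕ, t ∉ Finset.range k₀ →
            Set.indicator {ω' | (t : ℝ≥0∞) < τ ω'} (fun _ => (1 : ℝ≥0∞)) ω = 0 := by
          intro t ht
          refine Set.indicator_of_notMem ?_ _
          rw [Set.mem_setOf_eq, hval, not_lt]
          have htk : k₀ ≤ t := by
            rw [Finset.mem_range] at ht
            omega
          exact_mod_cast htk
        have hterm : ∀ t ∈ Finset.range k₀,
            Set.indicator {ω' | (t : ℝ≥0∞) < τ ω'} (fun _ => (1 : ℝ≥0∞)) ω = 1 := by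
          intro t ht
          refine Set.indicator_of_mem ?_ _
          rw [Set.mem_setOf_eq, hval]
          exact_mod_cast Finset.mem_range.mp ht
        rw [hval, tsum_eq_sum hz, Finset.sum_congr rfl hterm, Finset.sum_const,
          Finset.card_range, nsmul_eq_mul, mul_one]
      · have hemp : {k | c ≤ C k ω} = ∅ := Set.not_nonempty_iff_eq_empty.mp hne
        have hval : τ ω = ⊤ := by
          rw [hτ, hemp]
          simp
        have hone : ∀ t : ℕ,
            Set.indicator {ω' | (t : ℝ≥0∞) < τ ω'} (fun _ => (1 : ℝ≥0∞)) ω = 1 := by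
          intro t
          refine Set.indicator_of_mem ?_ _
          rw [Set.mem_setOf_eq, hval]
          exact lt_top_iff_ne_top.mpr (ENNReal.natCast_ne_top t)
        calc τ ω = ⊤ := hval
          _ = ∑' _ : ℕ, (1 : ℝ≥0∞) :=
            (ENNReal.tsum_const_eq_top_of_ne_zero one_ne_zero).symm
          _ = _ := (tsum_congr hone).symm
    calc ∫⁻ ω, τ ω ∂P
        = ∫⁻ ω, ∑' (t : ℕ),
            Set.indicator {ω' | (t : ℝ≥0∞) < τ ω'} (fun _ => (1 : ℝ≥0∞)) ω ∂P :=
          lintegral_congr hτval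
      _ = ∑' (t : ℕ), ∫⁻ ω,
            Set.indicator {ω' | (t : ℝ≥0∞) < τ ω'} (fun _ => (1 : ℝ≥0∞)) ω ∂P :=
          lintegral_tsum fun t => (measurable_const.indicator (hTgtmeas t)).aemeasurable
      _ = ∑' (t : ℕ), P {ω | (t : ℝ≥0∞) < τ ω} := by
          refine tsum_congr fun t => ?_
          rw [lintegral_indicator_const (hTgtmeas t), one_mul]
  -- the per-cycle bound
  have hAB : ∀ t, Dset t ∩ Aset t = ⋃ N, (Dset t ∩ Bset t N) := by
    intro t
    ext ω
    simp only [hAsetdef, hBsetdef, Set.mem_inter_iff, Set.mem_setOf_eq, Set.mem_iUnion]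
    constructor
    · rintro ⟨hD, m, hm1, hcm⟩; exact ⟨m, hD, m, hm1, le_rfl, hcm⟩
    · rintro ⟨N, hD, m, hm1, hmN, hcm⟩; exact ⟨hD, m, hm1, hcm⟩
  have hDA : ∀ t, P (Dset t ∩ Aset t)
      ≤ ENNReal.ofReal (Real.exp (-(ω₀ * c))) * P {ω | (t : ℝ≥0∞) < τ ω} := by
    intro t
    rw [hAB t]
    have hBmono : Monotone (fun N => Dset t ∩ Bset t N) := by
      intro N N' hNN' ω hω
      rw [Set.mem_inter_iff, hBsetdef] at hω ⊢
      obtain ⟨hD, m, hm1, hmN, hcm⟩ := hω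
      exact ⟨hD, m, hm1, hmN.trans hNN', hcm⟩
    rw [hBmono.directed_le.measure_iUnion]
    apply iSup_le
    intro N
    rw [hDB t N]
    calc P (Dset t) * P (Bset t N)
        ≤ P {ω | (t : ℝ≥0∞) < τ ω} * ENNReal.ofReal (Real.exp (-(ω₀ * c))) :=
          mul_le_mul' (measure_mono (hD_sub_Tgt t)) (hChernoff t N)
      _ = _ := mul_comm _ _
  -- conclusion
  by_cases hinf : P {ω | ∀ k, ¬ c ≤ C k ω} = 0
  · have hAllmeas : MeasurableSet {ω | ∀ k, ¬ c ≤ C k ω} := by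
      have h : {ω | ∀ k, ¬ c ≤ C k ω} = ⋂ k, {ω | c ≤ C k ω}ᶜ := by
        ext ω; simp only [Set.mem_setOf_eq, Set.mem_iInter, Set.mem_compl_iff]
      rw [h]
      exact MeasurableSet.iInter fun k =>
        (measurableSet_le measurable_const (hCmeas k)).compl
    have hcompl : {ω | ∃ k, c ≤ C k ω} = {ω | ∀ k, ¬ c ≤ C k ω}ᶜ := by
      ext ω
      simp only [Set.mem_setOf_eq, Set.mem_compl_iff, not_forall, not_not]
    have h1 : P {ω | ∃ k, c ≤ C k ω} = 1 := by
      rw [hcompl, measure_compl hAllmeas (measure_ne_top _ _), hinf, measure_univ, tsub_zero]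
    have hchain : (1 : ℝ≥0∞)
        ≤ ENNReal.ofReal (Real.exp (-(ω₀ * c))) * ∫⁻ ω, τ ω ∂P := by
      calc (1 : ℝ≥0∞) = P {ω | ∃ k, c ≤ C k ω} := h1.symm
        _ ≤ P (⋃ t, Dset t ∩ Aset t) := measure_mono hcover
        _ ≤ ∑' t, P (Dset t ∩ Aset t) := measure_iUnion_le _
        _ ≤ ∑' (t : ℕ), ENNReal.ofReal (Real.exp (-(ω₀ * c))) * P {ω | (t : ℝ≥0∞) < τ ω} :=
            ENNReal.tsum_le_tsum hDA
        _ = ENNReal.ofReal (Real.exp (-(ω₀ * c))) * ∑' (t : ℕ), P {ω | (t : ℝ≥0∞) < τ ω} :=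
            ENNReal.tsum_mul_left
        _ = _ := by rw [hlint]
    have hQpos : ENNReal.ofReal (Real.exp (-(ω₀ * c))) ≠ 0 := by
      simp [ENNReal.ofReal_eq_zero, not_le, Real.exp_pos]
    have hQtop : ENNReal.ofReal (Real.exp (-(ω₀ * c))) ≠ ⊤ := ENNReal.ofReal_ne_top
    have hinvQ : (ENNReal.ofReal (Real.exp (-(ω₀ * c))))⁻¹
        = ENNReal.ofReal (Real.exp (ω₀ * c)) := by
      rw [Real.exp_neg, ENNReal.ofReal_inv_of_pos (Real.exp_pos _), inv_inv]
    calc ENNReal.ofReal (Real.exp (ω₀ * c))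
        = (ENNReal.ofReal (Real.exp (-(ω₀ * c))))⁻¹ * 1 := by rw [hinvQ, mul_one]
      _ ≤ (ENNReal.ofReal (Real.exp (-(ω₀ * c))))⁻¹ *
          (ENNReal.ofReal (Real.exp (-(ω₀ * c))) * ∫⁻ ω, τ ω ∂P) :=
          mul_le_mul_right hchain _
      _ = ∫⁻ ω, τ ω ∂P := by
          rw [← mul_assoc, ENNReal.inv_mul_cancel hQpos hQtop, one_mul]
  · -- positive probability of never crossing: the expectation is infinite
    have hAllmeas : MeasurableSet {ω | ∀ k, ¬ c ≤ C k ω} := by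
      have h : {ω | ∀ k, ¬ c ≤ C k ω} = ⋂ k, {ω | c ≤ C k ω}ᶜ := by
        ext ω; simp only [Set.mem_setOf_eq, Set.mem_iInter, Set.mem_compl_iff]
      rw [h]
      exact MeasurableSet.iInter fun k =>
        (measurableSet_le measurable_const (hCmeas k)).compl
    have htop : ∀ ω ∈ {ω | ∀ k, ¬ c ≤ C k ω}, τ ω = ⊤ := by
      intro ω hω
      rw [hτ]
      have hemp : {k | c ≤ C k ω} = ∅ := Set.eq_empty_iff_forall_notMem.mpr hω
      rw [hemp]
      simp
    have htopint : ∫⁻ ω, τ ω ∂P = ⊤ := by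
      refine top_unique ?_
      calc (⊤ : ℝ≥0∞) = ⊤ * P {ω | ∀ k, ¬ c ≤ C k ω} := (ENNReal.top_mul hinf).symm
        _ = ∫⁻ ω in {ω | ∀ k, ¬ c ≤ C k ω}, ⊤ ∂P := (setLIntegral_const _ _).symm
        _ = ∫⁻ ω in {ω | ∀ k, ¬ c ≤ C k ω}, τ ω ∂P :=
            (setLIntegral_congr_fun hAllmeas htop).symm
        _ ≤ ∫⁻ ω, τ ω ∂P := setLIntegral_le_lintegral _ _
    rw [htopint]
    exact le_top
end
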